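/- Fix d ≥ 3. In the polynomial ring R = ℂ[m_1,…,m_{d−1}], let J' be the monomial ideal generated by all monomials m_a·m_b·m_c with 1 ≤ a ≤ b < c ≤ d−1. Then every associated prime of the R-module R/J' is generated by exactly d−2 of the variables m_1,…,m_{d−1}; that is, each associated prime is of the form (m_i : i ∈ A) for some subset A ⊆ {1,…,d−1} with |A| = d−2. In particular J' is unmixed: all its associated primes have height d−2. -/

import Mathlib

open MvPolynomial

/-- The monomial ideal `J' ⊆ ℂ[m₁,…,m_{d-1}]` generated by all monomials `m_a·m_b·m_c`
with `1 ≤ a ≤ b < c ≤ d-1` (variable `i : Fin (d-1)` corresponds to `m_{i+1}`). -/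
noncomputable def gammaInitialIdeal (d : ℕ) : Ideal (MvPolynomial (Fin (d - 1)) ℂ) :=
  Ideal.span { p | ∃ a b c : Fin (d - 1), a ≤ b ∧ b < c ∧ p = X a * X b * X c }

namespace GammaAux

variable {n : ℕ}

/-- Exponent vectors of the generators of the ideal. -/
def gens (n : ℕ) : Set (Fin n →₀ ℕ) :=
  {s | ∃ a b c : Fin n, a ≤ b ∧ b < c ∧
    s = Finsupp.single a 1 + Finsupp.single b 1 + Finsupp.single c 1}

lemma one_le_first (p q r : Fin n) :
    1 ≤ ((Finsupp.single p 1 + Finsupp.single q 1 + Finsupp.single r 1 : Fin n →₀ ℕ)) p := by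
  have h1 : (Finsupp.single p 1 : Fin n →₀ ℕ) ≤
      Finsupp.single p 1 + Finsupp.single q 1 + Finsupp.single r 1 :=
    le_trans le_self_add le_self_add
  simpa using Finsupp.le_def.mp h1 p

lemma one_le_mid (p q r : Fin n) :
    1 ≤ ((Finsupp.single p 1 + Finsupp.single q 1 + Finsupp.single r 1 : Fin n →₀ ℕ)) q := by
  have h1 : (Finsupp.single q 1 : Fin n →₀ ℕ) ≤
      Finsupp.single p 1 + Finsupp.single q 1 + Finsupp.single r 1 :=
    le_trans le_add_self le_self_add
  simpa using Finsupp.le_def.mp h1 q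

lemma one_le_last (p q r : Fin n) :
    1 ≤ ((Finsupp.single p 1 + Finsupp.single q 1 + Finsupp.single r 1 : Fin n →₀ ℕ)) r := by
  have h1 : (Finsupp.single r 1 : Fin n →₀ ℕ) ≤
      Finsupp.single p 1 + Finsupp.single q 1 + Finsupp.single r 1 := le_add_self
  simpa using Finsupp.le_def.mp h1 r

lemma apply_eq_zero {p q r x : Fin n} (hp : p ≠ x) (hq : q ≠ x) (hr : r ≠ x) :
    ((Finsupp.single p 1 + Finsupp.single q 1 + Finsupp.single r 1 : Fin n →₀ ℕ)) x = 0 := by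
  simp [Finsupp.single_apply, hp, hq, hr]

lemma apply_last_eq_one {p q r x : Fin n} (hp : p ≠ x) (hq : q ≠ x) (hr : r = x) :
    ((Finsupp.single p 1 + Finsupp.single q 1 + Finsupp.single r 1 : Fin n →₀ ℕ)) x = 1 := by
  simp [Finsupp.single_apply, hp, hq, hr]

lemma pair_apply (a j x : Fin n) (K : ℕ) :
    ((Finsupp.single a 1 + Finsupp.single j K : Fin n →₀ ℕ)) x
      = (if a = x then 1 else 0) + (if j = x then K else 0) := by
  simp [Finsupp.single_apply]

lemma span_eq (d : ℕ) :
    gammaInitialIdeal d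
      = Ideal.span ((fun s => monomial s (1 : ℂ)) '' gens (d - 1)) := by
  unfold gammaInitialIdeal
  congr 1
  ext p
  constructor
  · rintro ⟨a, b, c, hab, hbc, rfl⟩
    exact ⟨_, ⟨a, b, c, hab, hbc, rfl⟩, by simp [X, monomial_mul]⟩
  · rintro ⟨s, ⟨a, b, c, hab, hbc, rfl⟩, rfl⟩
    exact ⟨a, b, c, hab, hbc, by simp [X, monomial_mul]⟩

lemma mem_J_iff {d : ℕ} (p : MvPolynomial (Fin (d - 1)) ℂ) :
    p ∈ gammaInitialIdeal d ↔ ∀ v ∈ p.support, ∃ s ∈ gens (d - 1), s ≤ v := by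
  rw [span_eq, mem_ideal_span_monomial_image]

lemma X_mul_mem_iff {d : ℕ} (i : Fin (d - 1)) (f : MvPolynomial (Fin (d - 1)) ℂ) :
    X i * f ∈ gammaInitialIdeal d ↔
      ∀ u ∈ f.support, ∃ s ∈ gens (d - 1), s ≤ Finsupp.single i 1 + u := by
  rw [mem_J_iff, support_X_mul]
  constructor
  · intro h u hu
    have := h _ (Finset.mem_map_of_mem _ hu)
    simpa [addLeftEmbedding_apply] using this
  · intro h v hv
    rw [Finset.mem_map] at hv
    obtain ⟨u, hu, rfl⟩ := hv
    simpa [addLeftEmbedding_apply] using h u hu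

lemma not_gen_le_single {s : Fin n →₀ ℕ} (hs : s ∈ gens n) (j : Fin n) (k : ℕ) :
    ¬s ≤ Finsupp.single j k := by
  obtain ⟨a, b, c, hab, hbc, rfl⟩ := hs
  intro h
  have hb : 1 ≤ Finsupp.single j k b := le_trans (one_le_mid a b c) (Finsupp.le_def.mp h b)
  have hc : 1 ≤ Finsupp.single j k c := le_trans (one_le_last a b c) (Finsupp.le_def.mp h c)
  rw [Finsupp.single_apply] at hb hc
  by_cases h1 : j = b
  · by_cases h2 : j = c
    · exact hbc.ne (h1.symm.trans h2)
    · rw [if_neg h2] at hc; omega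
  · rw [if_neg h1] at hb; omega

lemma not_gen_le_pair {s : Fin n →₀ ℕ} (hs : s ∈ gens n) {a j : Fin n} (haj : a < j) (K : ℕ) :
    ¬s ≤ Finsupp.single a 1 + Finsupp.single j K := by
  obtain ⟨p, q, r, hpq, hqr, rfl⟩ := hs
  intro h
  have key : ∀ x : Fin n,
      1 ≤ ((Finsupp.single p 1 + Finsupp.single q 1 + Finsupp.single r 1 : Fin n →₀ ℕ)) x →
        x = a ∨ x = j := by
    intro x hx
    have hhx := le_trans hx (Finsupp.le_def.mp h x)
    rw [pair_apply] at hhx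
    by_cases h1 : a = x
    · exact Or.inl h1.symm
    · by_cases h2 : j = x
      · exact Or.inr h2.symm
      · rw [if_neg h1, if_neg h2] at hhx; omega
  have hq : q = a := by
    rcases key q (one_le_mid p q r) with h' | h'
    · exact h'
    · rcases key r (one_le_last p q r) with h'' | h''
      · rw [h', h''] at hqr; exact absurd hqr (asymm haj)
      · rw [h', h''] at hqr; exact absurd hqr (lt_irrefl _)
  have hr : r = j := by
    rcases key r (one_le_last p q r) with h' | h'
    · rw [hq, h'] at hqr; exact absurd hqr (lt_irrefl _)
    · exact h'
  have hp : p = a := by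
    rcases key p (one_le_first p q r) with h' | h'
    · exact h'
    · rw [h', hq] at hpq; exact absurd (lt_of_le_of_lt hpq haj) (lt_irrefl _)
  rw [hp, hq] at h
  have h2 : (2 : ℕ) ≤ ((Finsupp.single a 1 + Finsupp.single a 1 + Finsupp.single r 1 : Fin n →₀ ℕ)) a := by
    have h1 : (Finsupp.single a 1 + Finsupp.single a 1 : Fin n →₀ ℕ) ≤
        Finsupp.single a 1 + Finsupp.single a 1 + Finsupp.single r 1 := le_self_add
    simpa using Finsupp.le_def.mp h1 a
  have h3 := le_trans h2 (Finsupp.le_def.mp h a)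
  rw [pair_apply, if_pos rfl, if_neg (haj.ne')] at h3
  omega

/-- membership of a sum of three distinct singles (one of which is `j`) in `gens`. -/
lemma gen3_mem {p q j : Fin n} (hpq : p < q) (hpj : p ≠ j) (hqj : q ≠ j) :
    Finsupp.single p 1 + Finsupp.single q 1 + Finsupp.single j 1 ∈ gens n := by
  rcases lt_trichotomy j p with h | h | h
  · exact ⟨j, p, q, h.le, hpq, by abel⟩
  · exact absurd h.symm hpj
  · rcases lt_trichotomy j q with h2 | h2 | h2
    · exact ⟨p, j, q, h.le, h2, by abel⟩
    · exact absurd h2.symm hqj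
    · exact ⟨p, q, j, hpq.le, h2, rfl⟩


lemma step_max {u : Fin n →₀ ℕ} {i : Fin n} (hi : i ∈ u.support)
    (hmax : ∀ x ∈ u.support, x ≤ i) (hnou : ∀ s ∈ gens n, ¬s ≤ u)
    {s : Fin n →₀ ℕ} (hs : s ∈ gens n) : ¬s ≤ Finsupp.single i 1 + u := by
  intro hle
  by_cases hsu : s ≤ u
  · exact hnou s hs hsu
  rw [Finsupp.le_def] at hsu; push_neg at hsu
  obtain ⟨y, hy⟩ := hsu
  have hyi : y = i := by
    by_contra hne
    have hx := Finsupp.le_def.mp hle y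
    rw [Finsupp.add_apply, Finsupp.single_apply, if_neg (fun hh : i = y => hne hh.symm)] at hx
    omega
  rw [hyi] at hy
  obtain ⟨p, q, r, hpq, hqr, rfl⟩ := hs
  have hmem3 : p = i ∨ q = i ∨ r = i := by
    by_contra hc
    push_neg at hc
    rw [apply_eq_zero hc.1 hc.2.1 hc.2.2] at hy
    omega
  have hri : r ≠ i := by
    intro hr
    have hqi : q ≠ i := fun hq => absurd (hq ▸ hr ▸ hqr) (lt_irrefl _)
    have hpi : p ≠ i := fun hp => absurd (lt_of_le_of_lt (hp ▸ hpq) (hr ▸ hqr)) (lt_irrefl i)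
    rw [apply_last_eq_one hpi hqi hr] at hy
    exact absurd (Finsupp.mem_support_iff.mp hi) (by omega)
  have hur : 1 ≤ u r := by
    have h1 := le_trans (one_le_last p q r) (Finsupp.le_def.mp hle r)
    rw [Finsupp.add_apply, Finsupp.single_apply, if_neg (fun hh : i = r => hri hh.symm)] at h1
    omega
  have hrle : r ≤ i := hmax r (Finsupp.mem_support_iff.mpr (by omega))
  rcases hmem3 with hp | hq | hr
  · exact absurd (lt_of_le_of_lt (hp ▸ hpq) (lt_of_lt_of_le hqr hrle)) (lt_irrefl i)
  · exact absurd (lt_of_lt_of_le (hq ▸ hqr) hrle) (lt_irrefl i)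
  · exact hri hr

lemma triple_le {p q j : Fin n} {u : Fin n →₀ ℕ} (hpj : p ≠ j) (hqj : q ≠ j) (hpq : p ≠ q)
    (hp : 1 ≤ u p) (hq : 1 ≤ u q) :
    Finsupp.single p 1 + Finsupp.single q 1 + Finsupp.single j 1
      ≤ Finsupp.single j 1 + u := by
  rw [Finsupp.le_def]
  intro x
  by_cases h1 : x = p
  · subst h1; simp [Finsupp.add_apply, Finsupp.single_apply, Ne.symm hpq, Ne.symm hpj, hp]
  · by_cases h2 : x = q
    · subst h2; simp [Finsupp.add_apply, Finsupp.single_apply, hpq, Ne.symm hqj, hq]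
    · by_cases h3 : x = j
      · subst h3
        simp [Finsupp.add_apply, Finsupp.single_apply, hpj, hqj]
      · simp [Finsupp.add_apply, Finsupp.single_apply, Ne.symm h1, Ne.symm h2, Ne.symm h3]

lemma double_le {a j : Fin n} {u : Fin n →₀ ℕ} (haj : a ≠ j) (ha : 2 ≤ u a) :
    Finsupp.single a 1 + Finsupp.single a 1 + Finsupp.single j 1
      ≤ Finsupp.single j 1 + u := by
  rw [Finsupp.le_def]
  intro x
  by_cases h1 : x = a
  · subst h1
    simp [Finsupp.add_apply, Finsupp.single_apply, Ne.symm haj]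
    omega
  · by_cases h3 : x = j
    · subst h3
      simp [Finsupp.add_apply, Finsupp.single_apply, haj]
    · simp [Finsupp.add_apply, Finsupp.single_apply, Ne.symm h1, Ne.symm h3]

lemma jj_le {a j : Fin n} {u : Fin n →₀ ℕ} (hja : j ≠ a) (hj : 1 ≤ u j) (ha : 1 ≤ u a) :
    Finsupp.single j 1 + Finsupp.single j 1 + Finsupp.single a 1
      ≤ Finsupp.single j 1 + u := by
  rw [Finsupp.le_def]
  intro x
  by_cases h1 : x = j
  · subst h1
    simp [Finsupp.add_apply, Finsupp.single_apply, Ne.symm hja]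
    omega
  · by_cases h3 : x = a
    · subst h3
      simp [Finsupp.add_apply, Finsupp.single_apply, hja, ha]
    · simp [Finsupp.add_apply, Finsupp.single_apply, Ne.symm h1, Ne.symm h3]

lemma classify {d : ℕ} {f : MvPolynomial (Fin (d - 1)) ℂ} {j : Fin (d - 1)}
    {u : Fin (d - 1) →₀ ℕ} (hu : u ∈ f.support)
    (hnou : ∀ s ∈ gens (d - 1), ¬s ≤ Finsupp.single j 1 + u)
    (hXa : ∀ a : Fin (d - 1), a ≠ j → X a * f ∈ gammaInitialIdeal d) :
    u = Finsupp.single j (u j) ∨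
      ∃ a : Fin (d - 1), a < j ∧ u = Finsupp.single a 1 + Finsupp.single j (u j) := by
  by_cases hsup : ∀ x ∈ u.support, x = j
  · left
    ext x
    by_cases hx : x = j
    · subst hx; simp [Finsupp.single_apply]
    · rw [Finsupp.single_apply, if_neg (fun hh : j = x => hx hh.symm)]
      exact Finsupp.notMem_support_iff.mp (fun hmem => hx (hsup x hmem))
  · push_neg at hsup
    obtain ⟨a, ha, haj⟩ := hsup
    have hua : 1 ≤ u a := Nat.one_le_iff_ne_zero.mpr (Finsupp.mem_support_iff.mp ha)
    have honly : ∀ x ∈ u.support, x = a ∨ x = j := by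
      intro b hb
      by_contra hc
      push_neg at hc
      obtain ⟨hba, hbj⟩ := hc
      have hub : 1 ≤ u b := Nat.one_le_iff_ne_zero.mpr (Finsupp.mem_support_iff.mp hb)
      rcases lt_or_gt_of_ne (Ne.symm hba) with hab | hab
      · exact hnou _ (gen3_mem hab haj hbj) (triple_le haj hbj hab.ne hua hub)
      · exact hnou _ (gen3_mem hab hbj haj) (triple_le hbj haj hab.ne hub hua)
    rcases lt_trichotomy a j with hlt | heq | hgt
    · -- a < j : show u a = 1 and conclude case II
      have hua2 : u a < 2 := by
        by_contra h2
        push_neg at h2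
        exact hnou _ ⟨a, a, j, le_rfl, hlt, rfl⟩ (double_le haj h2)
      right
      refine ⟨a, hlt, ?_⟩
      ext x
      by_cases h1 : x = a
      · rw [h1, pair_apply, if_pos rfl, if_neg (fun hh : j = a => haj hh.symm)]
        omega
      · by_cases h2 : x = j
        · rw [h2, pair_apply, if_neg (fun hh : a = j => haj hh), if_pos rfl]
          omega
        · rw [pair_apply, if_neg (fun hh : a = x => h1 hh.symm),
            if_neg (fun hh : j = x => h2 hh.symm)]
          have hxs : x ∉ u.support := fun hmem => by
            rcases honly x hmem with h | h
            · exact h1 h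
            · exact h2 h
          rw [Finsupp.notMem_support_iff.mp hxs]
          simp
    · exact absurd heq haj
    · -- j < a : contradiction
      exfalso
      have huj : u j = 0 := by
        by_contra h0
        exact hnou _ ⟨j, j, a, le_rfl, hgt, rfl⟩
          (jj_le (Ne.symm haj) (Nat.one_le_iff_ne_zero.mpr h0) hua)
      have hu_eq : u = Finsupp.single a (u a) := by
        ext x
        by_cases h1 : x = a
        · subst h1; rw [Finsupp.single_apply, if_pos rfl]
        · rw [Finsupp.single_apply, if_neg (fun hh : a = x => h1 hh.symm)]
          by_cases h2 : x = j
          · rw [h2]; exact huj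
          · have : x ∉ u.support := fun hmem => by
              rcases honly x hmem with h | h
              · exact h1 h
              · exact h2 h
            exact Finsupp.notMem_support_iff.mp this
      obtain ⟨s, hsg, hsle⟩ := (X_mul_mem_iff a f).mp (hXa a haj) u hu
      rw [hu_eq, ← Finsupp.single_add] at hsle
      exact not_gen_le_single hsg a (1 + u a) hsle

end GammaAux
open GammaAux

/-- Every associated prime of `R/J'` is generated by exactly `d - 2` of the variables
`m₁,…,m_{d-1}`; in particular `J'` is unmixed of height `d - 2`. -/
theorem gammaInitialIdeal_unmixed (d : ℕ) (hd : 3 ≤ d)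
    (P : Ideal (MvPolynomial (Fin (d - 1)) ℂ))
    (hP : IsAssociatedPrime P (MvPolynomial (Fin (d - 1)) ℂ ⧸ gammaInitialIdeal d)) :
    ∃ A : Finset (Fin (d - 1)), A.card = d - 2 ∧
      P = Ideal.span ((fun i => (X i : MvPolynomial (Fin (d - 1)) ℂ)) '' ↑A) := by
  classical
  obtain ⟨hprime, x, hx⟩ := isAssociatedPrime_iff.mp hP
  obtain ⟨f, rfl⟩ := Ideal.Quotient.mk_surjective x
  have hmem : ∀ g : MvPolynomial (Fin (d - 1)) ℂ,
      g ∈ P ↔ g * f ∈ gammaInitialIdeal d := by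
    intro g
    rw [hx, Submodule.mem_colon_singleton, Submodule.mem_bot, ← Ideal.Quotient.mk_eq_mk,
      ← Submodule.Quotient.mk_smul, Submodule.Quotient.mk_eq_zero, smul_eq_mul]
  have hJP : gammaInitialIdeal d ≤ P := fun z hz => (hmem z).mpr (Ideal.mul_mem_right f _ hz)
  have hf : f ∉ gammaInitialIdeal d := by
    intro h
    exact hprime.ne_top (P.eq_top_iff_one.mpr ((hmem 1).mpr (by simpa using h)))
  by_cases hall : ∀ i : Fin (d - 1), X i ∈ P
  · exfalso
    obtain ⟨u, hu, hnou⟩ : ∃ u ∈ f.support, ∀ s ∈ gens (d - 1), ¬s ≤ u := by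
      by_contra h
      push_neg at h
      exact hf ((mem_J_iff f).mpr h)
    rcases Finset.eq_empty_or_nonempty u.support with hse | hse
    · have hu0 : u = 0 := Finsupp.support_eq_empty.mp hse
      have hi0 : (0 : ℕ) < d - 1 := by omega
      set i₀ : Fin (d - 1) := ⟨0, hi0⟩
      obtain ⟨s, hsg, hle⟩ := (X_mul_mem_iff i₀ f).mp ((hmem _).mp (hall i₀)) u hu
      rw [hu0, add_zero] at hle
      exact not_gen_le_single hsg i₀ 1 hle
    · obtain ⟨i, hi, hmax⟩ := Finset.exists_max_image u.support id hse
      obtain ⟨s, hsg, hle⟩ := (X_mul_mem_iff i f).mp ((hmem _).mp (hall i)) u hu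
      exact step_max hi hmax hnou hsg hle
  · push_neg at hall
    obtain ⟨j, hjP⟩ := hall
    have hia : ∀ i : Fin (d - 1), i ≠ j → X i ∈ P := by
      intro i hij
      by_contra hiP
      rcases lt_or_gt_of_ne hij with h | h
      · have hg : X i * X i * X j ∈ P := hJP (Ideal.subset_span ⟨i, i, j, le_rfl, h, rfl⟩)
        rcases hprime.mem_or_mem hg with h' | h'
        · rcases hprime.mem_or_mem h' with h'' | h''
          · exact hiP h''
          · exact hiP h''
        · exact hjP h'
      · have hg : X j * X j * X i ∈ P := hJP (Ideal.subset_span ⟨j, j, i, le_rfl, h, rfl⟩)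
        rcases hprime.mem_or_mem hg with h' | h'
        · rcases hprime.mem_or_mem h' with h'' | h''
          · exact hjP h''
          · exact hjP h''
        · exact hiP h'
    refine ⟨Finset.univ.erase j, ?_, ?_⟩
    · rw [Finset.card_erase_of_mem (Finset.mem_univ j), Finset.card_univ, Fintype.card_fin]
      omega
    · refine le_antisymm ?_ ?_
      · -- P ≤ span
        intro g hg
        have hgf : g * f ∈ gammaInitialIdeal d := (hmem g).mp hg
        have himg : ((fun i => (X i : MvPolynomial (Fin (d - 1)) ℂ)) '' ↑(Finset.univ.erase j))
            = X '' ↑(Finset.univ.erase j) := rfl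
        rw [himg, mem_ideal_span_X_image]
        by_contra hcon
        push_neg at hcon
        obtain ⟨v, hv, hv0⟩ := hcon
        have hvj : v = Finsupp.single j (v j) := by
          ext y
          by_cases hy : y = j
          · rw [hy, Finsupp.single_apply, if_pos rfl]
          · rw [Finsupp.single_apply, if_neg (fun hh : j = y => hy hh.symm)]
            exact hv0 y (Finset.mem_coe.mpr (Finset.mem_erase.mpr ⟨hy, Finset.mem_univ y⟩))
        have hXjf : X j * f ∉ gammaInitialIdeal d := fun h => hjP ((hmem _).mpr h)
        obtain ⟨u, hu, hnou⟩ :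
            ∃ u ∈ f.support, ∀ s ∈ gens (d - 1), ¬s ≤ Finsupp.single j 1 + u := by
          by_contra h
          push_neg at h
          exact hXjf ((X_mul_mem_iff j f).mpr h)
        have hXa : ∀ a : Fin (d - 1), a ≠ j → X a * f ∈ gammaInitialIdeal d :=
          fun a ha => (hmem _).mp (hia a ha)
        set Sg := g.support.filter (fun w => w = Finsupp.single j (w j)) with hSg
        have hvSg : v ∈ Sg := Finset.mem_filter.mpr ⟨hv, hvj⟩
        obtain ⟨v₀, hv₀S, hv₀max⟩ := Finset.exists_max_image Sg (fun w => w j) ⟨v, hvSg⟩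
        have hv₀g : v₀ ∈ g.support := (Finset.mem_filter.mp hv₀S).1
        have hv₀eq : v₀ = Finsupp.single j (v₀ j) := (Finset.mem_filter.mp hv₀S).2
        by_cases hcaseI : ∃ u' ∈ f.support, u' = Finsupp.single j (u' j)
        · -- Case I : f has a monomial which is a pure power of X j
          obtain ⟨u', hu'f, hu'eq⟩ := hcaseI
          set Sf := f.support.filter (fun w => w = Finsupp.single j (w j)) with hSf
          obtain ⟨u₀, hu₀S, hu₀max⟩ := Finset.exists_max_image Sf (fun w => w j)
            ⟨u', Finset.mem_filter.mpr ⟨hu'f, hu'eq⟩⟩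
          have hu₀f : u₀ ∈ f.support := (Finset.mem_filter.mp hu₀S).1
          have hu₀eq : u₀ = Finsupp.single j (u₀ j) := (Finset.mem_filter.mp hu₀S).2
          set w : Fin (d - 1) →₀ ℕ := Finsupp.single j (v₀ j + u₀ j) with hw
          have hco : coeff w (g * f) = coeff v₀ g * coeff u₀ f := by
            rw [coeff_mul]
            apply Finset.sum_eq_single_of_mem (v₀, u₀)
            · rw [Finset.HasAntidiagonal.mem_antidiagonal]
              show v₀ + u₀ = w
              rw [hw, Finsupp.single_add, ← hv₀eq, ← hu₀eq]
            · rintro ⟨p, q⟩ hpq hne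
              rw [Finset.HasAntidiagonal.mem_antidiagonal] at hpq
              have hpq' : p + q = w := hpq
              by_contra hterm
              have hterm' : coeff p g * coeff q f ≠ 0 := hterm
              have hpg : p ∈ g.support :=
                MvPolynomial.mem_support_iff.mpr (left_ne_zero_of_mul hterm')
              have hqf : q ∈ f.support :=
                MvPolynomial.mem_support_iff.mpr (right_ne_zero_of_mul hterm')
              have happ : ∀ y, p y + q y = w y := fun y => by
                rw [← Finsupp.add_apply, hpq']
              have hp0 : ∀ y, y ≠ j → p y = 0 := by
                intro y hy
                have h2 := happ y
                rw [hw, Finsupp.single_apply, if_neg (fun hh : j = y => hy hh.symm)] at h2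
                omega
              have hq0 : ∀ y, y ≠ j → q y = 0 := by
                intro y hy
                have h2 := happ y
                rw [hw, Finsupp.single_apply, if_neg (fun hh : j = y => hy hh.symm)] at h2
                omega
              have hpeq : p = Finsupp.single j (p j) := by
                ext y
                by_cases hy : y = j
                · rw [hy, Finsupp.single_apply, if_pos rfl]
                · rw [Finsupp.single_apply, if_neg (fun hh : j = y => hy hh.symm)]
                  exact hp0 y hy
              have hqeq : q = Finsupp.single j (q j) := by
                ext y
                by_cases hy : y = j
                · rw [hy, Finsupp.single_apply, if_pos rfl]
                · rw [Finsupp.single_apply, if_neg (fun hh : j = y => hy hh.symm)]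
                  exact hq0 y hy
              have hpm : p j ≤ v₀ j := hv₀max p (Finset.mem_filter.mpr ⟨hpg, hpeq⟩)
              have hqm : q j ≤ u₀ j := hu₀max q (Finset.mem_filter.mpr ⟨hqf, hqeq⟩)
              have hj' := happ j
              rw [hw, Finsupp.single_apply, if_pos rfl] at hj'
              have hpj : p j = v₀ j := by omega
              have hqj : q j = u₀ j := by omega
              apply hne
              have h1 : p = v₀ := by rw [hv₀eq, ← hpj]; exact hpeq
              have h2 : q = u₀ := by rw [hu₀eq, ← hqj]; exact hqeq
              rw [h1, h2]
          have hwsupp : w ∈ (g * f).support := MvPolynomial.mem_support_iff.mpr (by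
            rw [hco]
            exact mul_ne_zero (MvPolynomial.mem_support_iff.mp hv₀g)
              (MvPolynomial.mem_support_iff.mp hu₀f))
          obtain ⟨s, hsg, hsle⟩ := (mem_J_iff (g * f)).mp hgf w hwsupp
          rw [hw] at hsle
          exact not_gen_le_single hsg j (v₀ j + u₀ j) hsle
        · -- Case II
          rcases classify hu hnou hXa with hI | ⟨a, haj, hII⟩
          · exact hcaseI ⟨u, hu, hI⟩
          set Sf := f.support.filter
            (fun w => w = Finsupp.single a 1 + Finsupp.single j (w j)) with hSf
          obtain ⟨u₀, hu₀S, hu₀max⟩ := Finset.exists_max_image Sf (fun w => w j)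
            ⟨u, Finset.mem_filter.mpr ⟨hu, hII⟩⟩
          have hu₀f : u₀ ∈ f.support := (Finset.mem_filter.mp hu₀S).1
          have hu₀eq : u₀ = Finsupp.single a 1 + Finsupp.single j (u₀ j) :=
            (Finset.mem_filter.mp hu₀S).2
          set w : Fin (d - 1) →₀ ℕ :=
            Finsupp.single a 1 + Finsupp.single j (v₀ j + u₀ j) with hw
          have hwa : w a = 1 := by
            rw [hw, pair_apply, if_pos rfl, if_neg haj.ne']
          have hwj : w j = v₀ j + u₀ j := by
            rw [hw, pair_apply, if_neg haj.ne, if_pos rfl]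
            exact Nat.zero_add _
          have hw0 : ∀ y, y ≠ j → y ≠ a → w y = 0 := by
            intro y hy hy2
            rw [hw, pair_apply, if_neg (fun hh : a = y => hy2 hh.symm),
              if_neg (fun hh : j = y => hy hh.symm)]
          have hco : coeff w (g * f) = coeff v₀ g * coeff u₀ f := by
            rw [coeff_mul]
            apply Finset.sum_eq_single_of_mem (v₀, u₀)
            · rw [Finset.HasAntidiagonal.mem_antidiagonal]
              show v₀ + u₀ = w
              conv_lhs => rw [hv₀eq, hu₀eq]
              rw [hw, Finsupp.single_add]
              abel
            · rintro ⟨p, q⟩ hpq hne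
              rw [Finset.HasAntidiagonal.mem_antidiagonal] at hpq
              have hpq' : p + q = w := hpq
              by_contra hterm
              have hterm' : coeff p g * coeff q f ≠ 0 := hterm
              have hpg : p ∈ g.support :=
                MvPolynomial.mem_support_iff.mpr (left_ne_zero_of_mul hterm')
              have hqf : q ∈ f.support :=
                MvPolynomial.mem_support_iff.mpr (right_ne_zero_of_mul hterm')
              have happ : ∀ y, p y + q y = w y := fun y => by
                rw [← Finsupp.add_apply, hpq']
              have hpa := happ a
              rw [hwa] at hpa
              have hcase : q a = 0 ∨ (p a = 0 ∧ q a = 1) := by omega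
              rcases hcase with hqa | ⟨hpa0, hqa⟩
              · -- q would be a pure power of X j, contradicting hcaseI
                apply hcaseI
                refine ⟨q, hqf, ?_⟩
                ext y
                by_cases hy : y = j
                · rw [hy, Finsupp.single_apply, if_pos rfl]
                · rw [Finsupp.single_apply, if_neg (fun hh : j = y => hy hh.symm)]
                  by_cases hy2 : y = a
                  · rw [hy2]; exact hqa
                  · have h2 := happ y
                    rw [hw0 y hy hy2] at h2
                    omega
              · have hpeq : p = Finsupp.single j (p j) := by
                  ext y
                  by_cases hy : y = j
                  · rw [hy, Finsupp.single_apply, if_pos rfl]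
                  · rw [Finsupp.single_apply, if_neg (fun hh : j = y => hy hh.symm)]
                    by_cases hy2 : y = a
                    · rw [hy2]; exact hpa0
                    · have h2 := happ y
                      rw [hw0 y hy hy2] at h2
                      omega
                have hqeq : q = Finsupp.single a 1 + Finsupp.single j (q j) := by
                  ext y
                  rw [pair_apply]
                  by_cases hy2 : y = a
                  · rw [hy2, if_pos rfl, if_neg (fun hh : j = a => haj.ne' hh)]
                    omega
                  · rw [if_neg (fun hh : a = y => hy2 hh.symm)]
                    by_cases hy : y = j
                    · rw [hy, if_pos rfl]
                      omega
                    · rw [if_neg (fun hh : j = y => hy hh.symm)]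
                      have h2 := happ y
                      rw [hw0 y hy hy2] at h2
                      omega
                have hpm : p j ≤ v₀ j := hv₀max p (Finset.mem_filter.mpr ⟨hpg, hpeq⟩)
                have hqm : q j ≤ u₀ j := hu₀max q (Finset.mem_filter.mpr ⟨hqf, hqeq⟩)
                have hj' := happ j
                rw [hwj] at hj'
                have hpj : p j = v₀ j := by omega
                have hqj : q j = u₀ j := by omega
                apply hne
                have h1 : p = v₀ := by rw [hv₀eq, ← hpj]; exact hpeq
                have h2 : q = u₀ := by rw [hu₀eq, ← hqj]; exact hqeq
                rw [h1, h2]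
          have hwsupp : w ∈ (g * f).support := MvPolynomial.mem_support_iff.mpr (by
            rw [hco]
            exact mul_ne_zero (MvPolynomial.mem_support_iff.mp hv₀g)
              (MvPolynomial.mem_support_iff.mp hu₀f))
          obtain ⟨s, hsg, hsle⟩ := (mem_J_iff (g * f)).mp hgf w hwsupp
          rw [hw] at hsle
          exact not_gen_le_pair hsg haj (v₀ j + u₀ j) hsle
      · -- span ≤ P
        rw [Ideal.span_le]
        rintro p ⟨i, hi, rfl⟩
        exact hia i (Finset.mem_erase.mp (Finset.mem_coe.mp hi)).1
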